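/- Assume C is a generic bicategory satisfying Axioms 1 and 2. Then every generic 2-cell out of an identity, δ : id_Y ⟹ k ∘ h, is the unit of an adjunction h ⊣ k; conversely, every unit of an adjunction ν : id ⟹ g ∘ f is a generic 2-cell. -/

import Mathlib

open CategoryTheory CategoryTheory.Bicategory

universe w v u

namespace GenericBicat

variable {B : Type u} [Bicategory.{w, v} B]

/-- An object of the category of elements of `C(c, - ∘ -)` (through the object `Y`):
a factorization of the 1-cell `c` as a composite through `Y`, together with a 2-cell. -/
structure Fac {X Z : B} (c : X ⟶ Z) (Y : B) where
  fst : X ⟶ Y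
  snd : Y ⟶ Z
  cell : c ⟶ fst ≫ snd

/-- Morphisms in the category of elements of `C(c, - ∘ -)`: a pair of 2-cells
pasting one factorization to the other. -/
def FacHom {X Z : B} {c : X ⟶ Z} {Y : B} (F G : Fac c Y) : Prop :=
  ∃ (u : F.fst ⟶ G.fst) (v : F.snd ⟶ G.snd),
    G.cell = F.cell ≫ (u ▷ F.snd) ≫ (G.fst ◁ v)

/-- Two factorizations are connected if they lie in the same connected component of
the category of elements. -/
def Connected {X Z : B} {c : X ⟶ Z} {Y : B} (F G : Fac c Y) : Prop :=
  Relation.EqvGen FacHom F G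

/-- A 2-cell `δ : c ⟶ F.fst ≫ F.snd` is generic if it is initial in its connected
component of the category of elements of `C(c, - ∘ -)`. -/
def IsGeneric {X Z : B} {c : X ⟶ Z} {Y : B} (F : Fac c Y) : Prop :=
  ∀ G : Fac c Y, Connected F G →
    ∃! p : (F.fst ⟶ G.fst) × (F.snd ⟶ G.snd),
      G.cell = F.cell ≫ (p.1 ▷ F.snd) ≫ (G.fst ◁ p.2)

/-- A bicategory is generic if each presheaf `C(c, - ∘ -)` is a coproduct of representables;
equivalently, every 2-cell `c ⟶ a ≫ b` factors through a generic 2-cell. -/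
def IsGenericBicategory (B : Type u) [Bicategory.{w, v} B] : Prop :=
  ∀ {X Z : B} (c : X ⟶ Z) (Y : B) (G : Fac c Y), ∃ F : Fac c Y, IsGeneric F ∧ FacHom F G

/-- The pasting of a 2-cell `δ : c ⟶ l ≫ r` with a 2-cell `η : 𝟙 Y ⟶ h ≫ k` out of the
identity and comparison 2-cells `α : l ≫ h ⟶ a` and `β : k ≫ r ⟶ b`. -/
def pasteFac {X Y Y' Z : B} {l : X ⟶ Y} {r : Y ⟶ Z} {c : X ⟶ Z} (δ : c ⟶ l ≫ r)
    {h : Y ⟶ Y'} {k : Y' ⟶ Y} (η : 𝟙 Y ⟶ h ≫ k) {a : X ⟶ Y'} {b : Y' ⟶ Z}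
    (α : l ≫ h ⟶ a) (β : k ≫ r ⟶ b) : c ⟶ a ≫ b :=
  δ ≫ (l ◁ ((λ_ r).inv ≫ (η ▷ r) ≫ (α_ h k r).hom)) ≫ (α_ l h (k ≫ r)).inv ≫
    (α ▷ (k ≫ r)) ≫ (a ◁ β)

/-- `δ : c ⟶ l ≫ r` is an *initial generic* 2-cell: it is an invertible generic 2-cell,
every 2-cell `γ : c ⟶ a ≫ b` factors as `δ` pasted with a generic `η : 𝟙 Y ⟶ h ≫ k` out of
the identity and comparison 2-cells, and such factorizations are unique up to coherent
isomorphism. -/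
def IsInitialGeneric {X Y Z : B} {c : X ⟶ Z} (l : X ⟶ Y) (r : Y ⟶ Z) (δ : c ⟶ l ≫ r) : Prop :=
  IsGeneric (⟨l, r, δ⟩ : Fac c Y) ∧ IsIso δ ∧
  ∀ {Y' : B} (a : X ⟶ Y') (b : Y' ⟶ Z) (γ : c ⟶ a ≫ b),
    (∃ (h : Y ⟶ Y') (k : Y' ⟶ Y) (η : 𝟙 Y ⟶ h ≫ k) (α : l ≫ h ⟶ a) (β : k ≫ r ⟶ b),
      IsGeneric (⟨h, k, η⟩ : Fac (𝟙 Y) Y') ∧ γ = pasteFac δ η α β) ∧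
    (∀ (h : Y ⟶ Y') (k : Y' ⟶ Y) (η : 𝟙 Y ⟶ h ≫ k) (α : l ≫ h ⟶ a) (β : k ≫ r ⟶ b),
      IsGeneric (⟨h, k, η⟩ : Fac (𝟙 Y) Y') → γ = pasteFac δ η α β →
      ∀ (h' : Y ⟶ Y') (k' : Y' ⟶ Y) (η' : 𝟙 Y ⟶ h' ≫ k') (α' : l ≫ h' ⟶ a) (β' : k' ≫ r ⟶ b),
        IsGeneric (⟨h', k', η'⟩ : Fac (𝟙 Y) Y') → γ = pasteFac δ η' α' β' →
        ∃ (φ : h ≅ h') (ψ : k ≅ k'),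
          η' = η ≫ (φ.hom ▷ k) ≫ (h' ◁ ψ.hom) ∧
          α = (l ◁ φ.hom) ≫ α' ∧ β = (ψ.hom ▷ r) ≫ β')

/-- Axiom 1: every 1-cell has an initial generic 2-cell. -/
def Axiom1 (B : Type u) [Bicategory.{w, v} B] : Prop :=
  ∀ {X Z : B} (c : X ⟶ Z), ∃ (Y : B) (l : X ⟶ Y) (r : Y ⟶ Z) (δ : c ⟶ l ≫ r),
    IsInitialGeneric l r δ

/-- Axiom 2: initial factorizations yield initial generics: in any factorization through an
initial generic `δ : c ⟶ l ≫ r` via a generic `η : 𝟙 Y ⟶ h ≫ k` out of the identity, the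
identity 2-cells on `l ≫ h` and on `k ≫ r` are initial generics. -/
def Axiom2 (B : Type u) [Bicategory.{w, v} B] : Prop :=
  ∀ {X Y Y' Z : B} (l : X ⟶ Y) (r : Y ⟶ Z) (c : X ⟶ Z) (δ : c ⟶ l ≫ r),
    IsInitialGeneric l r δ →
    ∀ (h : Y ⟶ Y') (k : Y' ⟶ Y) (η : 𝟙 Y ⟶ h ≫ k), IsGeneric (⟨h, k, η⟩ : Fac (𝟙 Y) Y') →
      IsInitialGeneric l h (𝟙 (l ≫ h)) ∧ IsInitialGeneric k r (𝟙 (k ≫ r))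

end GenericBicat

namespace GenericBicat

section Helpers

variable {B : Type u} [Bicategory.{w, v} B]

section FacLemmas

variable {X Z : B} {c : X ⟶ Z} {Y : B}

theorem facHom_refl (F : Fac c Y) : FacHom F F :=
  ⟨𝟙 _, 𝟙 _, by simp⟩

/-- Composition law for the cell equations of `FacHom`. -/
theorem cell_comp {E F G : Fac c Y} {u : E.fst ⟶ F.fst} {v : E.snd ⟶ F.snd}
    {x : F.fst ⟶ G.fst} {y : F.snd ⟶ G.snd}
    (huv : F.cell = E.cell ≫ (u ▷ E.snd) ≫ (F.fst ◁ v))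
    (hxy : G.cell = F.cell ≫ (x ▷ F.snd) ≫ (G.fst ◁ y)) :
    G.cell = E.cell ≫ ((u ≫ x) ▷ E.snd) ≫ (G.fst ◁ (v ≫ y)) := by
  rw [hxy, huv]
  simp only [Category.assoc, comp_whiskerRight, Bicategory.whiskerLeft_comp]
  congr 1
  slice_lhs 2 3 => rw [whisker_exchange]
  simp [Category.assoc]

theorem facHom_comp {E F G : Fac c Y} (h₁ : FacHom E F) (h₂ : FacHom F G) : FacHom E G := by
  obtain ⟨u, v, huv⟩ := h₁
  obtain ⟨x, y, hxy⟩ := h₂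
  exact ⟨u ≫ x, v ≫ y, cell_comp huv hxy⟩

theorem connected_of_facHom {F G : Fac c Y} (h : FacHom F G) : Connected F G :=
  Relation.EqvGen.rel _ _ h

theorem connected_refl (F : Fac c Y) : Connected F F :=
  Relation.EqvGen.refl F

theorem connected_symm {F G : Fac c Y} (h : Connected F G) : Connected G F :=
  Relation.EqvGen.symm _ _ h

theorem connected_trans {E F G : Fac c Y} (h₁ : Connected E F) (h₂ : Connected F G) :
    Connected E G :=
  Relation.EqvGen.trans _ _ _ h₁ h₂

/-- uniqueness part of genericity, in convenient form. -/
theorem IsGeneric.pair_unique {F G : Fac c Y} (hF : IsGeneric F) (hconn : Connected F G)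
    {u u' : F.fst ⟶ G.fst} {v v' : F.snd ⟶ G.snd}
    (h : G.cell = F.cell ≫ (u ▷ F.snd) ≫ (G.fst ◁ v))
    (h' : G.cell = F.cell ≫ (u' ▷ F.snd) ≫ (G.fst ◁ v')) : u = u' ∧ v = v' := by
  obtain ⟨p, -, hp⟩ := hF G hconn
  have e1 := hp (u, v) h
  have e2 := hp (u', v') h'
  constructor
  · exact congrArg Prod.fst (e1.trans e2.symm)
  · exact congrArg Prod.snd (e1.trans e2.symm)

/-- Two connected generics are related by an invertible pair of 2-cells. -/
theorem isos_of_generics {F G : Fac c Y} (hF : IsGeneric F) (hG : IsGeneric G)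
    (hconn : Connected F G) :
    ∃ (u : F.fst ⟶ G.fst) (v : F.snd ⟶ G.snd),
      G.cell = F.cell ≫ (u ▷ F.snd) ≫ (G.fst ◁ v) ∧ IsIso u ∧ IsIso v := by
  obtain ⟨⟨u, v⟩, hu, -⟩ := hF G hconn
  obtain ⟨⟨x, y⟩, hx, -⟩ := hG F (connected_symm hconn)
  dsimp at hu hx
  have hFF := cell_comp hu hx
  have hGG := cell_comp hx hu
  have hid : F.cell = F.cell ≫ (𝟙 F.fst ▷ F.snd) ≫ (F.fst ◁ 𝟙 F.snd) := by simp
  have hid' : G.cell = G.cell ≫ (𝟙 G.fst ▷ G.snd) ≫ (G.fst ◁ 𝟙 G.snd) := by simp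
  obtain ⟨e1, e2⟩ := hF.pair_unique (connected_refl F) hFF hid
  obtain ⟨e3, e4⟩ := hG.pair_unique (connected_refl G) hGG hid'
  exact ⟨u, v, hu, ⟨x, e1, e3⟩, ⟨y, e2, e4⟩⟩

/-- Genericity transports along an invertible `FacHom`. -/
theorem isGeneric_of_iso {F G : Fac c Y} (hF : IsGeneric F)
    (u : F.fst ⟶ G.fst) (v : F.snd ⟶ G.snd) (hu : IsIso u) (hv : IsIso v)
    (h : G.cell = F.cell ≫ (u ▷ F.snd) ≫ (G.fst ◁ v)) : IsGeneric G := by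
  intro H hconn
  have hFG : Connected F G := connected_of_facHom ⟨u, v, h⟩
  have hFH : Connected F H := connected_trans hFG hconn
  obtain ⟨⟨p, q⟩, hp, hpu⟩ := hF H hFH
  dsimp at hp
  have hinv : F.cell = G.cell ≫ (inv u ▷ G.snd) ≫ (F.fst ◁ inv v) := by
    have hex : (G.fst ◁ v) ≫ (inv u ▷ G.snd) = (inv u ▷ F.snd) ≫ (F.fst ◁ v) :=
      whisker_exchange (inv u) v
    rw [h]
    simp only [Category.assoc]
    rw [← Category.assoc (G.fst ◁ v), hex]
    simp [← comp_whiskerRight, ← Bicategory.whiskerLeft_comp]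
  refine ⟨(inv u ≫ p, inv v ≫ q), cell_comp hinv hp, ?_⟩
  rintro ⟨s, t⟩ hst
  dsimp at hst
  have := hpu (u ≫ s, v ≫ t) (cell_comp h hst)
  have e1 : u ≫ s = p := congrArg Prod.fst this
  have e2 : v ≫ t = q := congrArg Prod.snd this
  have e3 : s = inv u ≫ p := by rw [← e1]; simp
  have e4 : t = inv v ≫ q := by rw [← e2]; simp
  rw [Prod.mk.injEq]
  exact ⟨e3, e4⟩

end FacLemmas

section PartA

open Bicategory

/-- The unit of any adjunction in a generic bicategory is a generic 2-cell. -/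
theorem unit_isGeneric (hB : IsGenericBicategory B) {a b : B} {f : a ⟶ b} {g : b ⟶ a}
    (adj : Bicategory.Adjunction f g) : IsGeneric (⟨f, g, adj.unit⟩ : Fac (𝟙 a) b) := by
  obtain ⟨F, hF, u, v, hrel⟩ := hB (𝟙 a) b ⟨f, g, adj.unit⟩
  dsimp at u v hrel
  set η := adj.unit with hη
  set cu := adj.counit with hcu
  -- the mates of `v` and `u` with respect to the adjunction
  set w : f ⟶ F.fst := (λ_ f).inv ≫ (F.cell ▷ f) ≫ (α_ F.fst F.snd f).hom ≫
    (F.fst ◁ (v ▷ f)) ≫ (F.fst ◁ cu) ≫ (ρ_ F.fst).hom with hw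
  set v' : g ⟶ F.snd := (ρ_ g).inv ≫ (g ◁ F.cell) ≫ (α_ g F.fst F.snd).inv ≫
    ((g ◁ u) ▷ F.snd) ≫ (cu ▷ F.snd) ≫ (λ_ F.snd).hom with hv'
  have I1 : w ≫ u = 𝟙 f := by
    rw [hw]
    simp only [Category.assoc]
    calc (λ_ f).inv ≫ (F.cell ▷ f) ≫ (α_ F.fst F.snd f).hom ≫
        (F.fst ◁ (v ▷ f)) ≫ (F.fst ◁ cu) ≫ (ρ_ F.fst).hom ≫ u
        = 𝟙 _ ⊗≫ F.cell ▷ f ⊗≫ (F.fst ◁ ((v ▷ f) ≫ cu) ≫ u ▷ 𝟙 b) ⊗≫ 𝟙 _ := by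
          bicategory
      _ = 𝟙 _ ⊗≫ F.cell ▷ f ⊗≫ (u ▷ (F.snd ≫ f) ≫ f ◁ ((v ▷ f) ≫ cu)) ⊗≫ 𝟙 _ := by
          rw [whisker_exchange]
      _ = 𝟙 _ ⊗≫ leftZigzag (F.cell ≫ (u ▷ F.snd) ≫ (f ◁ v)) cu ⊗≫ 𝟙 _ := by
          dsimp only [leftZigzag]; bicategory
      _ = 𝟙 f := by rw [← hrel, adj.left_triangle]; bicategory
  have I2 : v' ≫ v = 𝟙 g := by
    rw [hv']
    simp only [Category.assoc]
    calc (ρ_ g).inv ≫ (g ◁ F.cell) ≫ (α_ g F.fst F.snd).inv ≫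
        ((g ◁ u) ▷ F.snd) ≫ (cu ▷ F.snd) ≫ (λ_ F.snd).hom ≫ v
        = 𝟙 _ ⊗≫ g ◁ F.cell ⊗≫ (((g ◁ u) ≫ cu) ▷ F.snd ≫ 𝟙 b ◁ v) ⊗≫ 𝟙 _ := by
          bicategory
      _ = 𝟙 _ ⊗≫ g ◁ F.cell ⊗≫ ((g ≫ F.fst) ◁ v ≫ ((g ◁ u) ≫ cu) ▷ g) ⊗≫ 𝟙 _ := by
          rw [← whisker_exchange]
      _ = 𝟙 _ ⊗≫ g ◁ F.cell ⊗≫ ((g ≫ F.fst) ◁ v ≫ (g ◁ u) ▷ g) ⊗≫ cu ▷ g ⊗≫ 𝟙 _ := by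
          bicategory
      _ = 𝟙 _ ⊗≫ g ◁ F.cell ⊗≫ ((g ◁ u) ▷ F.snd ≫ (g ≫ f) ◁ v) ⊗≫ cu ▷ g ⊗≫ 𝟙 _ := by
          rw [whisker_exchange]
      _ = 𝟙 _ ⊗≫ rightZigzag (F.cell ≫ (u ▷ F.snd) ≫ (f ◁ v)) cu ⊗≫ 𝟙 _ := by
          dsimp only [rightZigzag]; bicategory
      _ = 𝟙 g := by rw [← hrel, adj.right_triangle]; bicategory
  have I3 : F.cell ≫ ((u ≫ w) ▷ F.snd) = F.cell ≫ (F.fst ◁ (v ≫ v')) := by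
    rw [hw]
    calc F.cell ≫ ((u ≫ (λ_ f).inv ≫ (F.cell ▷ f) ≫ (α_ F.fst F.snd f).hom ≫
        (F.fst ◁ (v ▷ f)) ≫ (F.fst ◁ cu) ≫ (ρ_ F.fst).hom) ▷ F.snd)
        = F.cell ⊗≫ (𝟙 a ◁ (u ▷ F.snd) ≫ F.cell ▷ (f ≫ F.snd)) ⊗≫
            ((F.fst ◁ v) ▷ (f ≫ F.snd)) ⊗≫ (F.fst ◁ (cu ▷ F.snd)) ⊗≫ 𝟙 _ := by
          bicategory
      _ = F.cell ⊗≫ (F.cell ▷ (F.fst ≫ F.snd) ≫ (F.fst ≫ F.snd) ◁ (u ▷ F.snd)) ⊗≫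
            ((F.fst ◁ v) ▷ (f ≫ F.snd)) ⊗≫ (F.fst ◁ (cu ▷ F.snd)) ⊗≫ 𝟙 _ := by
          rw [whisker_exchange]
      _ = 𝟙 _ ⊗≫ (𝟙 a ◁ F.cell ≫ F.cell ▷ (F.fst ≫ F.snd)) ⊗≫
            ((F.fst ≫ F.snd) ◁ (u ▷ F.snd)) ⊗≫ ((F.fst ◁ v) ▷ (f ≫ F.snd)) ⊗≫
            (F.fst ◁ (cu ▷ F.snd)) ⊗≫ 𝟙 _ := by
          bicategory
      _ = 𝟙 _ ⊗≫ (F.cell ▷ 𝟙 a ≫ (F.fst ≫ F.snd) ◁ F.cell) ⊗≫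
            ((F.fst ≫ F.snd) ◁ (u ▷ F.snd)) ⊗≫ ((F.fst ◁ v) ▷ (f ≫ F.snd)) ⊗≫
            (F.fst ◁ (cu ▷ F.snd)) ⊗≫ 𝟙 _ := by
          rw [whisker_exchange]
      _ = 𝟙 _ ⊗≫ (F.cell ▷ 𝟙 a) ⊗≫ ((F.fst ≫ F.snd) ◁ F.cell) ⊗≫
            ((F.fst ≫ F.snd) ◁ (u ▷ F.snd) ≫ (F.fst ◁ v) ▷ (f ≫ F.snd)) ⊗≫
            (F.fst ◁ (cu ▷ F.snd)) ⊗≫ 𝟙 _ := by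
          bicategory
      _ = 𝟙 _ ⊗≫ (F.cell ▷ 𝟙 a) ⊗≫ ((F.fst ≫ F.snd) ◁ F.cell ≫
            (F.fst ◁ v) ▷ (F.fst ≫ F.snd)) ⊗≫ ((F.fst ≫ g) ◁ (u ▷ F.snd)) ⊗≫
            (F.fst ◁ (cu ▷ F.snd)) ⊗≫ 𝟙 _ := by
          rw [whisker_exchange]; bicategory
      _ = 𝟙 _ ⊗≫ (F.cell ▷ 𝟙 a) ⊗≫ ((F.fst ◁ v) ▷ 𝟙 a ≫ (F.fst ≫ g) ◁ F.cell) ⊗≫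
            ((F.fst ≫ g) ◁ (u ▷ F.snd)) ⊗≫ (F.fst ◁ (cu ▷ F.snd)) ⊗≫ 𝟙 _ := by
          rw [whisker_exchange]
      _ = F.cell ≫ (F.fst ◁ (v ≫ v')) := by
          rw [hv']; bicategory
  -- use the genericity of F to conclude `u ≫ w = 𝟙` and `v ≫ v' = 𝟙`
  have hM1 : (⟨F.fst, F.snd, F.cell ≫ ((u ≫ w) ▷ F.snd)⟩ : Fac (𝟙 a) b).cell =
      F.cell ≫ ((u ≫ w) ▷ F.snd) ≫
        ((⟨F.fst, F.snd, F.cell ≫ ((u ≫ w) ▷ F.snd)⟩ : Fac (𝟙 a) b).fst ◁ 𝟙 F.snd) := by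
    simp only [Bicategory.whiskerLeft_id, Category.comp_id]
  have hM2 : (⟨F.fst, F.snd, F.cell ≫ ((u ≫ w) ▷ F.snd)⟩ : Fac (𝟙 a) b).cell =
      F.cell ≫ (𝟙 F.fst ▷ F.snd) ≫
        ((⟨F.fst, F.snd, F.cell ≫ ((u ≫ w) ▷ F.snd)⟩ : Fac (𝟙 a) b).fst ◁ (v ≫ v')) := by
    simp only [Bicategory.id_whiskerRight, Category.id_comp]
    exact I3
  obtain ⟨e1, e2⟩ := hF.pair_unique (connected_of_facHom ⟨_, _, hM1⟩) hM1 hM2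
  have hu : IsIso u := ⟨w, e1, I1⟩
  have hv : IsIso v := ⟨v', e2.symm, I2⟩
  exact isGeneric_of_iso hF u v hu hv hrel

end PartA

section PartB

/-- The identity adjunction whose unit is the inverse left unitor. -/
def idAdj (Y : B) : Bicategory.Adjunction (𝟙 Y) (𝟙 Y) where
  unit := (λ_ (𝟙 Y)).inv
  counit := (λ_ (𝟙 Y)).hom
  left_triangle := by unfold leftZigzag; bicategory
  right_triangle := by unfold rightZigzag; bicategory

/-- The trivial factorization of the identity 1-cell is an initial generic. -/
theorem idFac_isInitialGeneric (hB : IsGenericBicategory B) (Y : B) :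
    IsInitialGeneric (𝟙 Y) (𝟙 Y) ((λ_ (𝟙 Y)).inv) := by
  have hgen : IsGeneric (⟨𝟙 Y, 𝟙 Y, (λ_ (𝟙 Y)).inv⟩ : Fac (𝟙 Y) Y) :=
    unit_isGeneric hB (idAdj Y)
  refine ⟨hgen, inferInstance, ?_⟩
  intro Y' a b γ
  constructor
  · obtain ⟨F, hF, u, v, h⟩ := hB (𝟙 Y) Y' ⟨a, b, γ⟩
    dsimp at u v h
    refine ⟨F.fst, F.snd, F.cell, (λ_ F.fst).hom ≫ u, (ρ_ F.snd).hom ≫ v, hF, ?_⟩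
    rw [h]; dsimp only [pasteFac]; bicategory
  · intro h k η α β hη hpaste h' k' η' α' β' hη' hpaste'
    have e : γ = η ≫ (((λ_ h).inv ≫ α) ▷ k) ≫ (a ◁ ((ρ_ k).inv ≫ β)) := by
      rw [hpaste]; dsimp only [pasteFac]; bicategory
    have e' : γ = η' ≫ (((λ_ h').inv ≫ α') ▷ k') ≫ (a ◁ ((ρ_ k').inv ≫ β')) := by
      rw [hpaste']; dsimp only [pasteFac]; bicategory
    have fh : FacHom (⟨h, k, η⟩ : Fac (𝟙 Y) Y') ⟨a, b, γ⟩ := ⟨_, _, e⟩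
    have fh' : FacHom (⟨h', k', η'⟩ : Fac (𝟙 Y) Y') ⟨a, b, γ⟩ := ⟨_, _, e'⟩
    have hconn : Connected (⟨h, k, η⟩ : Fac (𝟙 Y) Y') ⟨h', k', η'⟩ :=
      connected_trans (connected_of_facHom fh) (connected_symm (connected_of_facHom fh'))
    obtain ⟨φ₀, ψ₀, htw, hφ, hψ⟩ := isos_of_generics hη hη' hconn
    dsimp at φ₀ ψ₀ htw
    haveI := hφ; haveI := hψ
    obtain ⟨eq1, eq2⟩ := hη.pair_unique (connected_of_facHom fh) e
      (cell_comp (E := (⟨h, k, η⟩ : Fac (𝟙 Y) Y')) (F := (⟨h', k', η'⟩ : Fac (𝟙 Y) Y'))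
        (G := ⟨a, b, γ⟩) htw e')
    refine ⟨asIso φ₀, asIso ψ₀, htw, ?_, ?_⟩
    · have : (λ_ h).hom ≫ φ₀ ≫ (λ_ h').inv = 𝟙 Y ◁ φ₀ := by
        rw [← Bicategory.leftUnitor_naturality]; simp
      calc α = (λ_ h).hom ≫ ((λ_ h).inv ≫ α) := by simp
        _ = (λ_ h).hom ≫ (φ₀ ≫ ((λ_ h').inv ≫ α')) := by rw [eq1]
        _ = ((λ_ h).hom ≫ φ₀ ≫ (λ_ h').inv) ≫ α' := by simp
        _ = (𝟙 Y ◁ φ₀) ≫ α' := by rw [this]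
    · have : (ρ_ k).hom ≫ ψ₀ ≫ (ρ_ k').inv = ψ₀ ▷ 𝟙 Y := by
        rw [← Bicategory.rightUnitor_naturality]; simp
      calc β = (ρ_ k).hom ≫ ((ρ_ k).inv ≫ β) := by simp
        _ = (ρ_ k).hom ≫ (ψ₀ ≫ ((ρ_ k').inv ≫ β')) := by rw [eq2]
        _ = ((ρ_ k).hom ≫ ψ₀ ≫ (ρ_ k').inv) ≫ β' := by simp
        _ = (ψ₀ ▷ 𝟙 Y) ≫ β' := by rw [this]

end PartB

section PartD

/-- The main direction: a generic 2-cell out of an identity is the unit of an adjunction. -/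
theorem generic_is_unit (hB : IsGenericBicategory B) (hA2 : Axiom2 B)
    {Y Y' : B} {h : Y ⟶ Y'} {k : Y' ⟶ Y} (η : 𝟙 Y ⟶ h ≫ k)
    (hη : IsGeneric (⟨h, k, η⟩ : Fac (𝟙 Y) Y')) :
    ∃ adj : Bicategory.Adjunction h k, adj.unit = η := by
  -- Axiom 2, applied twice starting from the trivial initial generic of `𝟙 Y`
  have hid := idFac_isInitialGeneric hB Y
  have step1 := hA2 (𝟙 Y) (𝟙 Y) (𝟙 Y) ((λ_ (𝟙 Y)).inv) hid h k η hη
  have step2 := hA2 k (𝟙 Y) (k ≫ 𝟙 Y) (𝟙 (k ≫ 𝟙 Y)) step1.2 h k η hη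
  have hIG : IsInitialGeneric k h (𝟙 (k ≫ h)) := step2.1
  -- factor the unitors of `k ≫ h` through the initial generic `𝟙 (k ≫ h)`
  obtain ⟨p, q, θ, A, Bc, hθ, hEq1⟩ := (hIG.2.2 (𝟙 Y') (k ≫ h) ((λ_ (k ≫ h)).inv)).1
  obtain ⟨p', q', θ', A', B', hθ', hEq2⟩ := (hIG.2.2 (k ≫ h) (𝟙 Y') ((ρ_ (k ≫ h)).inv)).1
  have lem1 : pasteFac (𝟙 (k ≫ h)) θ A Bc ≫ (λ_ (k ≫ h)).hom = 𝟙 (k ≫ h) := by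
    rw [← hEq1]; simp
  have lem2 : pasteFac (𝟙 (k ≫ h)) θ' A' B' ≫ (ρ_ (k ≫ h)).hom = 𝟙 (k ≫ h) := by
    rw [← hEq2]; simp
  -- the two key pasting identities
  have K1 : η ≫ (h ◁ ((ρ_ k).inv ≫ (k ◁ η) ≫ (α_ k h k).inv))
      = θ ≫ (((λ_ p).inv ≫ (η ▷ p) ≫ (α_ h k p).hom ≫ (h ◁ A) ≫ (ρ_ h).hom) ▷ q)
          ≫ (h ◁ ((ρ_ q).inv ≫ (q ◁ η) ≫ (α_ q h k).inv ≫ (Bc ▷ k))) := by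
    symm
    calc θ ≫ (((λ_ p).inv ≫ (η ▷ p) ≫ (α_ h k p).hom ≫ (h ◁ A) ≫ (ρ_ h).hom) ▷ q)
          ≫ (h ◁ ((ρ_ q).inv ≫ (q ◁ η) ≫ (α_ q h k).inv ≫ (Bc ▷ k)))
        = 𝟙 _ ⊗≫ (𝟙 Y ◁ θ ≫ η ▷ (p ≫ q)) ⊗≫ h ◁ (A ▷ q) ⊗≫ (h ≫ q) ◁ η
            ⊗≫ h ◁ (Bc ▷ k) ⊗≫ 𝟙 _ := by
          bicategory
      _ = 𝟙 _ ⊗≫ (η ▷ 𝟙 Y ≫ (h ≫ k) ◁ θ) ⊗≫ h ◁ (A ▷ q) ⊗≫ (h ≫ q) ◁ η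
            ⊗≫ h ◁ (Bc ▷ k) ⊗≫ 𝟙 _ := by
          rw [whisker_exchange]
      _ = 𝟙 _ ⊗≫ η ▷ 𝟙 Y ⊗≫ (h ≫ k) ◁ θ ⊗≫
            (((h ◁ A) ▷ q) ▷ 𝟙 Y ≫ ((h ≫ 𝟙 Y') ≫ q) ◁ η) ⊗≫ h ◁ (Bc ▷ k) ⊗≫ 𝟙 _ := by
          bicategory
      _ = 𝟙 _ ⊗≫ η ▷ 𝟙 Y ⊗≫ (h ≫ k) ◁ θ ⊗≫
            (((h ≫ (k ≫ p)) ≫ q) ◁ η ≫ ((h ◁ A) ▷ q) ▷ (h ≫ k)) ⊗≫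
            h ◁ (Bc ▷ k) ⊗≫ 𝟙 _ := by
          rw [← whisker_exchange]
      _ = 𝟙 _ ⊗≫ η ▷ 𝟙 Y ⊗≫ (((h ≫ k) ◁ θ) ▷ 𝟙 Y ≫ ((h ≫ k) ≫ (p ≫ q)) ◁ η) ⊗≫
            (((h ◁ A) ▷ q) ▷ (h ≫ k)) ⊗≫ h ◁ (Bc ▷ k) ⊗≫ 𝟙 _ := by
          bicategory
      _ = 𝟙 _ ⊗≫ η ▷ 𝟙 Y ⊗≫ (((h ≫ k) ≫ 𝟙 Y) ◁ η ≫ ((h ≫ k) ◁ θ) ▷ (h ≫ k)) ⊗≫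
            (((h ◁ A) ▷ q) ▷ (h ≫ k)) ⊗≫ h ◁ (Bc ▷ k) ⊗≫ 𝟙 _ := by
          rw [← whisker_exchange]
      _ = η ≫ (h ◁ ((ρ_ k).inv ≫ (k ◁ η) ≫ (α_ k h k).inv ≫
            ((pasteFac (𝟙 (k ≫ h)) θ A Bc ≫ (λ_ (k ≫ h)).hom) ▷ k))) := by
          dsimp only [pasteFac]; bicategory
      _ = η ≫ (h ◁ ((ρ_ k).inv ≫ (k ◁ η) ≫ (α_ k h k).inv)) := by
          rw [lem1]; simp
  have K2 : η ≫ (((λ_ h).inv ≫ (η ▷ h) ≫ (α_ h k h).hom) ▷ k)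
      = θ' ≫ (((λ_ p').inv ≫ (η ▷ p') ≫ (α_ h k p').hom ≫ (h ◁ A')) ▷ q')
          ≫ ((h ≫ (k ≫ h)) ◁
              ((ρ_ q').inv ≫ (q' ◁ η) ≫ (α_ q' h k).inv ≫ (B' ▷ k) ≫ (λ_ k).hom)) := by
    symm
    calc θ' ≫ (((λ_ p').inv ≫ (η ▷ p') ≫ (α_ h k p').hom ≫ (h ◁ A')) ▷ q')
          ≫ ((h ≫ (k ≫ h)) ◁
              ((ρ_ q').inv ≫ (q' ◁ η) ≫ (α_ q' h k).inv ≫ (B' ▷ k) ≫ (λ_ k).hom))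
        = 𝟙 _ ⊗≫ (𝟙 Y ◁ θ' ≫ η ▷ (p' ≫ q')) ⊗≫ h ◁ (A' ▷ q') ⊗≫
            ((h ≫ (k ≫ h)) ≫ q') ◁ η ⊗≫ (h ≫ (k ≫ h)) ◁ (B' ▷ k) ⊗≫ 𝟙 _ := by
          bicategory
      _ = 𝟙 _ ⊗≫ (η ▷ 𝟙 Y ≫ (h ≫ k) ◁ θ') ⊗≫ h ◁ (A' ▷ q') ⊗≫
            ((h ≫ (k ≫ h)) ≫ q') ◁ η ⊗≫ (h ≫ (k ≫ h)) ◁ (B' ▷ k) ⊗≫ 𝟙 _ := by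
          rw [whisker_exchange]
      _ = 𝟙 _ ⊗≫ η ▷ 𝟙 Y ⊗≫ (h ≫ k) ◁ θ' ⊗≫
            ((h ◁ (A' ▷ q')) ▷ 𝟙 Y ≫ (h ≫ ((k ≫ h) ≫ q')) ◁ η) ⊗≫
            (h ≫ (k ≫ h)) ◁ (B' ▷ k) ⊗≫ 𝟙 _ := by
          bicategory
      _ = 𝟙 _ ⊗≫ η ▷ 𝟙 Y ⊗≫ (h ≫ k) ◁ θ' ⊗≫
            ((h ≫ ((k ≫ p') ≫ q')) ◁ η ≫ (h ◁ (A' ▷ q')) ▷ (h ≫ k)) ⊗≫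
            (h ≫ (k ≫ h)) ◁ (B' ▷ k) ⊗≫ 𝟙 _ := by
          rw [← whisker_exchange]
      _ = 𝟙 _ ⊗≫ η ▷ 𝟙 Y ⊗≫ (((h ≫ k) ◁ θ') ▷ 𝟙 Y ≫ ((h ≫ k) ≫ (p' ≫ q')) ◁ η) ⊗≫
            ((h ◁ (A' ▷ q')) ▷ (h ≫ k)) ⊗≫ (h ≫ (k ≫ h)) ◁ (B' ▷ k) ⊗≫ 𝟙 _ := by
          bicategory
      _ = 𝟙 _ ⊗≫ η ▷ 𝟙 Y ⊗≫ (((h ≫ k) ≫ 𝟙 Y) ◁ η ≫ ((h ≫ k) ◁ θ') ▷ (h ≫ k)) ⊗≫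
            ((h ◁ (A' ▷ q')) ▷ (h ≫ k)) ⊗≫ (h ≫ (k ≫ h)) ◁ (B' ▷ k) ⊗≫ 𝟙 _ := by
          rw [← whisker_exchange]
      _ = 𝟙 _ ⊗≫ (η ▷ 𝟙 Y ≫ (h ≫ k) ◁ η) ⊗≫ (((h ≫ k) ◁ θ') ▷ (h ≫ k)) ⊗≫
            ((h ◁ (A' ▷ q')) ▷ (h ≫ k)) ⊗≫ (h ≫ (k ≫ h)) ◁ (B' ▷ k) ⊗≫ 𝟙 _ := by
          bicategory
      _ = 𝟙 _ ⊗≫ (𝟙 Y ◁ η ≫ η ▷ (h ≫ k)) ⊗≫ (((h ≫ k) ◁ θ') ▷ (h ≫ k)) ⊗≫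
            ((h ◁ (A' ▷ q')) ▷ (h ≫ k)) ⊗≫ (h ≫ (k ≫ h)) ◁ (B' ▷ k) ⊗≫ 𝟙 _ := by
          rw [← whisker_exchange]
      _ = η ≫ (((λ_ h).inv ≫ (η ▷ h) ≫ (α_ h k h).hom) ▷ k) ≫
            ((h ◁ (pasteFac (𝟙 (k ≫ h)) θ' A' B' ≫ (ρ_ (k ≫ h)).hom)) ▷ k) := by
          dsimp only [pasteFac]; bicategory
      _ = η ≫ (((λ_ h).inv ≫ (η ▷ h) ≫ (α_ h k h).hom) ▷ k) := by
          rw [lem2]; simp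
  -- comparison objects and the canonical isomorphisms between the generics
  have fh1 : FacHom (⟨h, k, η⟩ : Fac (𝟙 Y) Y')
      ⟨h, (k ≫ h) ≫ k, η ≫ (h ◁ ((ρ_ k).inv ≫ (k ◁ η) ≫ (α_ k h k).inv))⟩ :=
    ⟨𝟙 h, (ρ_ k).inv ≫ (k ◁ η) ≫ (α_ k h k).inv, by simp⟩
  have fh2 : FacHom (⟨p, q, θ⟩ : Fac (𝟙 Y) Y')
      ⟨h, (k ≫ h) ≫ k, η ≫ (h ◁ ((ρ_ k).inv ≫ (k ◁ η) ≫ (α_ k h k).inv))⟩ :=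
    ⟨(λ_ p).inv ≫ (η ▷ p) ≫ (α_ h k p).hom ≫ (h ◁ A) ≫ (ρ_ h).hom,
      (ρ_ q).inv ≫ (q ◁ η) ≫ (α_ q h k).inv ≫ (Bc ▷ k), K1⟩
  have fh3 : FacHom (⟨h, k, η⟩ : Fac (𝟙 Y) Y')
      ⟨h ≫ (k ≫ h), k, η ≫ (((λ_ h).inv ≫ (η ▷ h) ≫ (α_ h k h).hom) ▷ k)⟩ :=
    ⟨(λ_ h).inv ≫ (η ▷ h) ≫ (α_ h k h).hom, 𝟙 k, by simp⟩
  have fh4 : FacHom (⟨p', q', θ'⟩ : Fac (𝟙 Y) Y')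
      ⟨h ≫ (k ≫ h), k, η ≫ (((λ_ h).inv ≫ (η ▷ h) ≫ (α_ h k h).hom) ▷ k)⟩ :=
    ⟨(λ_ p').inv ≫ (η ▷ p') ≫ (α_ h k p').hom ≫ (h ◁ A'),
      (ρ_ q').inv ≫ (q' ◁ η) ≫ (α_ q' h k).inv ≫ (B' ▷ k) ≫ (λ_ k).hom, K2⟩
  have hconn1 : Connected (⟨h, k, η⟩ : Fac (𝟙 Y) Y') ⟨p, q, θ⟩ :=
    connected_trans (connected_of_facHom fh1) (connected_symm (connected_of_facHom fh2))
  have hconn2 : Connected (⟨h, k, η⟩ : Fac (𝟙 Y) Y') ⟨p', q', θ'⟩ :=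
    connected_trans (connected_of_facHom fh3) (connected_symm (connected_of_facHom fh4))
  obtain ⟨σ, τ, htw, hσ, hτ⟩ := isos_of_generics hη hθ hconn1
  obtain ⟨σ', τ', htw', hσ', hτ'⟩ := isos_of_generics hη hθ' hconn2
  dsimp at σ τ htw σ' τ' htw'
  -- the triangle identities, in raw form
  have e1 : (⟨h, (k ≫ h) ≫ k, η ≫ (h ◁ ((ρ_ k).inv ≫ (k ◁ η) ≫ (α_ k h k).inv))⟩ :
      Fac (𝟙 Y) Y').cell
      = η ≫ (𝟙 h ▷ k) ≫ (h ◁ ((ρ_ k).inv ≫ (k ◁ η) ≫ (α_ k h k).inv)) := by simp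
  have e3 : (⟨h ≫ (k ≫ h), k, η ≫ (((λ_ h).inv ≫ (η ▷ h) ≫ (α_ h k h).hom) ▷ k)⟩ :
      Fac (𝟙 Y) Y').cell
      = η ≫ ((((λ_ h).inv ≫ (η ▷ h) ≫ (α_ h k h).hom)) ▷ k) ≫ ((h ≫ (k ≫ h)) ◁ 𝟙 k) := by
    simp
  obtain ⟨T1raw, -⟩ := hη.pair_unique (connected_of_facHom fh1) e1
    (cell_comp (E := (⟨h, k, η⟩ : Fac (𝟙 Y) Y')) (F := (⟨p, q, θ⟩ : Fac (𝟙 Y) Y')) htw K1)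
  obtain ⟨-, T2raw⟩ := hη.pair_unique (connected_of_facHom fh3) e3
    (cell_comp (E := (⟨h, k, η⟩ : Fac (𝟙 Y) Y')) (F := (⟨p', q', θ'⟩ : Fac (𝟙 Y) Y'))
      htw' K2)
  -- the counit and the triangle identities
  have hσs : σ ≫ ((λ_ p).inv ≫ (η ▷ p) ≫ (α_ h k p).hom ≫ (h ◁ A) ≫ (ρ_ h).hom)
      = 𝟙 _ ⊗≫ η ▷ h ⊗≫ h ◁ ((k ◁ σ) ≫ A) ⊗≫ 𝟙 _ := by
    calc σ ≫ ((λ_ p).inv ≫ (η ▷ p) ≫ (α_ h k p).hom ≫ (h ◁ A) ≫ (ρ_ h).hom)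
        = 𝟙 _ ⊗≫ (𝟙 Y ◁ σ ≫ η ▷ p) ⊗≫ h ◁ A ⊗≫ 𝟙 _ := by bicategory
      _ = 𝟙 _ ⊗≫ (η ▷ h ≫ (h ≫ k) ◁ σ) ⊗≫ h ◁ A ⊗≫ 𝟙 _ := by rw [whisker_exchange]
      _ = 𝟙 _ ⊗≫ η ▷ h ⊗≫ h ◁ ((k ◁ σ) ≫ A) ⊗≫ 𝟙 _ := by bicategory
  have hτr : τ' ≫ ((ρ_ q').inv ≫ (q' ◁ η) ≫ (α_ q' h k).inv ≫ (B' ▷ k) ≫ (λ_ k).hom)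
      = 𝟙 _ ⊗≫ k ◁ η ⊗≫ ((τ' ▷ h) ≫ B') ▷ k ⊗≫ 𝟙 _ := by
    calc τ' ≫ ((ρ_ q').inv ≫ (q' ◁ η) ≫ (α_ q' h k).inv ≫ (B' ▷ k) ≫ (λ_ k).hom)
        = 𝟙 _ ⊗≫ (τ' ▷ 𝟙 Y ≫ q' ◁ η) ⊗≫ B' ▷ k ⊗≫ 𝟙 _ := by bicategory
      _ = 𝟙 _ ⊗≫ (k ◁ η ≫ τ' ▷ (h ≫ k)) ⊗≫ B' ▷ k ⊗≫ 𝟙 _ := by rw [← whisker_exchange]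
      _ = 𝟙 _ ⊗≫ k ◁ η ⊗≫ ((τ' ▷ h) ≫ B') ▷ k ⊗≫ 𝟙 _ := by bicategory
  have lt : leftZigzag η ((k ◁ σ) ≫ A) = (λ_ h).hom ≫ (ρ_ h).inv := by
    calc leftZigzag η ((k ◁ σ) ≫ A)
        = (λ_ h).hom ≫ (σ ≫ ((λ_ p).inv ≫ (η ▷ p) ≫ (α_ h k p).hom ≫ (h ◁ A) ≫
            (ρ_ h).hom)) ≫ (ρ_ h).inv := by
          rw [hσs]; unfold leftZigzag; bicategory
      _ = (λ_ h).hom ≫ (ρ_ h).inv := by rw [← T1raw]; simp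
  have rt' : rightZigzag η ((τ' ▷ h) ≫ B') = (ρ_ k).hom ≫ (λ_ k).inv := by
    calc rightZigzag η ((τ' ▷ h) ≫ B')
        = (ρ_ k).hom ≫ (τ' ≫ ((ρ_ q').inv ≫ (q' ◁ η) ≫ (α_ q' h k).inv ≫ (B' ▷ k) ≫
            (λ_ k).hom)) ≫ (λ_ k).inv := by
          rw [hτr]; unfold rightZigzag; bicategory
      _ = (ρ_ k).hom ≫ (λ_ k).inv := by rw [← T2raw]; simp
  -- the two counits agree
  have lt1 : (λ_ h).inv ≫ (η ▷ h) ≫ (α_ h k h).hom ≫ (h ◁ ((k ◁ σ) ≫ A)) ≫ (ρ_ h).hom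
      = 𝟙 h := by
    have := lt
    unfold leftZigzag at this
    calc (λ_ h).inv ≫ (η ▷ h) ≫ (α_ h k h).hom ≫ (h ◁ ((k ◁ σ) ≫ A)) ≫ (ρ_ h).hom
        = (λ_ h).inv ≫ (leftZigzag η ((k ◁ σ) ≫ A)) ≫ (ρ_ h).hom := by
          unfold leftZigzag; bicategory
      _ = 𝟙 h := by rw [lt]; simp
  have hee : ((τ' ▷ h) ≫ B') = ((k ◁ σ) ≫ A) := by
    calc (τ' ▷ h) ≫ B'
        = (k ◁ ((λ_ h).inv ≫ (η ▷ h) ≫ (α_ h k h).hom ≫ (h ◁ ((k ◁ σ) ≫ A)) ≫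
            (ρ_ h).hom)) ≫ ((τ' ▷ h) ≫ B') := by rw [lt1]; simp
      _ = 𝟙 _ ⊗≫ k ◁ (η ▷ h) ⊗≫ ((k ≫ h) ◁ ((k ◁ σ) ≫ A) ≫ ((τ' ▷ h) ≫ B') ▷ 𝟙 Y') ⊗≫
            𝟙 _ := by bicategory
      _ = 𝟙 _ ⊗≫ k ◁ (η ▷ h) ⊗≫ (((τ' ▷ h) ≫ B') ▷ (k ≫ h) ≫ 𝟙 Y' ◁ ((k ◁ σ) ≫ A)) ⊗≫
            𝟙 _ := by rw [whisker_exchange]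
      _ = 𝟙 _ ⊗≫ (rightZigzag η ((τ' ▷ h) ≫ B')) ▷ h ⊗≫ ((k ◁ σ) ≫ A) ⊗≫ 𝟙 _ := by
          unfold rightZigzag; bicategory
      _ = (k ◁ σ) ≫ A := by rw [rt']; bicategory
  -- assemble the adjunction
  refine ⟨⟨η, (k ◁ σ) ≫ A, lt, ?_⟩, rfl⟩
  rw [← hee]
  exact rt'

end PartD

end Helpers

end GenericBicat

open GenericBicat

/-- In a generic bicategory satisfying Axioms 1 and 2, every generic 2-cell out of an
identity `η : 𝟙 Y ⟶ h ≫ k` is the unit of an adjunction `h ⊣ k`; conversely, every unit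
of an adjunction is a generic 2-cell out of an identity. -/
theorem generic_out_of_identity_iff_unit {B : Type u} [Bicategory.{w, v} B]
    (hB : IsGenericBicategory B) (hA1 : Axiom1 B) (hA2 : Axiom2 B) :
    (∀ {Y Y' : B} (h : Y ⟶ Y') (k : Y' ⟶ Y) (η : 𝟙 Y ⟶ h ≫ k),
      IsGeneric (⟨h, k, η⟩ : Fac (𝟙 Y) Y') → ∃ adj : h ⊣ k, adj.unit = η) ∧
    (∀ {a b : B} (f : a ⟶ b) (g : b ⟶ a) (adj : f ⊣ g),
      IsGeneric (⟨f, g, adj.unit⟩ : Fac (𝟙 a) b)) := by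
  constructor
  · intro Y Y' h k η hη
    exact generic_is_unit hB hA2 η hη
  · intro a b f g adj
    exact unit_isGeneric hB adj
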